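/- Let 0 < a < b, 1 < σ ≤ 2, λ ∈ ℝ, and let G be the Green's function G(x,τ) = (1/Γ(σ))·[((ln(x/a)/ln(b/a))^{σ−1}·(ln(b/τ))^{σ−1} − (ln(x/τ))^{σ−1})/τ] for a ≤ τ ≤ x ≤ b, and G(x,τ) = (1/Γ(σ))·(ln(x/a)/ln(b/a))^{σ−1}·(ln(b/τ))^{σ−1}/τ for a ≤ x ≤ τ ≤ b. If u : [a,b] → ℝ is continuous, not identically zero, and satisfies u(x) = λ·∫_a^b G(x,τ)·u(τ) dτ for all x ∈ [a,b], then |λ| ≥ σ^{σ+1}·Γ(σ)/((σ−1)^{σ−1}·(ln(b/a))^{σ}). -/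

import Mathlib

open Real Set
open MeasureTheory intervalIntegral

private lemma aux_deriv (σ e : ℝ) (hσ : 1 ≤ σ) {τ : ℝ} (hτ : 0 < τ) :
    HasDerivAt (fun t => -(Real.log e - Real.log t) ^ σ / σ)
      ((Real.log e - Real.log τ) ^ (σ - 1) / τ) τ := by
  have hσ0 : σ ≠ 0 := by linarith
  have h1 : HasDerivAt (fun t : ℝ => Real.log e - Real.log t) (-τ⁻¹) τ :=
    (Real.hasDerivAt_log hτ.ne').const_sub (Real.log e)
  have h2 := (Real.hasDerivAt_rpow_const (x := Real.log e - Real.log τ) (p := σ)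
    (Or.inr hσ)).comp τ h1
  have h3 := (h2.div_const σ).neg
  have hfun : (fun t => -(Real.log e - Real.log t) ^ σ / σ)
      = fun t => -(((fun x : ℝ => x ^ σ) ∘ fun t : ℝ => Real.log e - Real.log t) t / σ) :=
    funext fun t => by simp [neg_div]
  rw [hfun]
  refine h3.congr_deriv ?_
  field_simp

private lemma aux_cont (σ e a b : ℝ) (hσ : 1 ≤ σ) (ha : 0 < a) :
    ContinuousOn (fun τ : ℝ => (Real.log e - Real.log τ) ^ (σ - 1) / τ) (Icc a b) := by
  have hsub : Icc a b ⊆ {(0:ℝ)}ᶜ := fun t ht => by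
    simp only [mem_compl_iff, mem_singleton_iff]
    exact (lt_of_lt_of_le ha ht.1).ne'
  exact ((continuousOn_const.sub (Real.continuousOn_log.mono hsub)).rpow_const
      (fun x _ => Or.inr (by linarith))).div continuousOn_id
    (fun t ht => (lt_of_lt_of_le ha ht.1).ne')

private lemma aux_integral (σ c d e : ℝ) (hσ : 1 < σ) (hc : 0 < c) (hcd : c ≤ d) (hde : d ≤ e) :
    ∫ τ in c..d, (Real.log e - Real.log τ) ^ (σ - 1) / τ
      = ((Real.log e - Real.log c) ^ σ - (Real.log e - Real.log d) ^ σ) / σ := by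
  have hint : IntervalIntegrable (fun τ : ℝ => (Real.log e - Real.log τ) ^ (σ - 1) / τ)
      volume c d :=
    (aux_cont σ e c d hσ.le hc).intervalIntegrable_of_Icc hcd
  rw [intervalIntegral.integral_eq_sub_of_hasDerivAt
    (fun t ht => aux_deriv σ e hσ.le (lt_of_lt_of_le hc ((uIcc_of_le hcd ▸ ht).1))) hint]
  ring

private lemma key_bound (σ s : ℝ) (hσ : 1 < σ) (hs0 : 0 ≤ s) (hs1 : s ≤ 1) :
    s ^ (σ - 1) * (1 - s) ≤ (σ - 1) ^ (σ - 1) / σ ^ σ := by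
  have hσ0 : (0:ℝ) < σ := by linarith
  have hσ1' : (0:ℝ) < σ - 1 := by linarith
  have hp₁0 : 0 ≤ s * (σ / (σ - 1)) := mul_nonneg hs0 (by positivity)
  have hp₂0 : 0 ≤ (1 - s) * σ := mul_nonneg (by linarith) hσ0.le
  have hgm := Real.geom_mean_le_arith_mean2_weighted
    (w₁ := (σ - 1) / σ) (w₂ := 1 / σ) (p₁ := s * (σ / (σ - 1))) (p₂ := (1 - s) * σ)
    (by positivity) (by positivity) hp₁0 hp₂0 (by field_simp; ring)
  have hsum : (σ - 1) / σ * (s * (σ / (σ - 1))) + 1 / σ * ((1 - s) * σ) = 1 := by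
    field_simp; ring
  rw [hsum] at hgm
  have h2 : ((s * (σ / (σ - 1))) ^ ((σ - 1) / σ) * (((1 - s) * σ) ^ (1 / σ))) ^ σ ≤ 1 := by
    calc ((s * (σ / (σ - 1))) ^ ((σ - 1) / σ) * (((1 - s) * σ) ^ (1 / σ))) ^ σ ≤ 1 ^ σ :=
          Real.rpow_le_rpow (by positivity) hgm hσ0.le
      _ = 1 := Real.one_rpow σ
  rw [Real.mul_rpow (by positivity) (by positivity), ← Real.rpow_mul hp₁0,
    ← Real.rpow_mul hp₂0] at h2
  have e₁ : (σ - 1) / σ * σ = σ - 1 := by field_simp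
  have e₂ : 1 / σ * σ = 1 := by field_simp
  rw [e₁, e₂, Real.rpow_one, Real.mul_rpow hs0 (by positivity),
    Real.div_rpow hσ0.le hσ1'.le] at h2
  have hpow1 : (0:ℝ) < σ ^ (σ - 1) := Real.rpow_pos_of_pos hσ0 _
  have hpow2 : (0:ℝ) < (σ - 1) ^ (σ - 1) := Real.rpow_pos_of_pos hσ1' _
  have heq : s ^ (σ - 1) * (σ ^ (σ - 1) / (σ - 1) ^ (σ - 1)) * ((1 - s) * σ)
      = s ^ (σ - 1) * σ ^ (σ - 1) * ((1 - s) * σ) / (σ - 1) ^ (σ - 1) := by ring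
  rw [heq, div_le_one hpow2] at h2
  have hσσ : σ ^ σ = σ ^ (σ - 1) * σ := by
    rw [← Real.rpow_add_one hσ0.ne' (σ - 1)]; ring_nf
  rw [le_div_iff₀ (by positivity), hσσ]
  nlinarith [h2]

theorem stmt_9 (a b σ lam : ℝ) (ha : 0 < a) (hab : a < b) (hσ1 : 1 < σ) (hσ2 : σ ≤ 2)
    (G : ℝ → ℝ → ℝ)
    (hG : ∀ x τ, G x τ =
      if τ ≤ x then
        (1 / Real.Gamma σ) *
          (((Real.log (x / a) / Real.log (b / a)) ^ (σ - 1) * (Real.log (b / τ)) ^ (σ - 1)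
            - (Real.log (x / τ)) ^ (σ - 1)) / τ)
      else
        (1 / Real.Gamma σ) *
          ((Real.log (x / a) / Real.log (b / a)) ^ (σ - 1) * (Real.log (b / τ)) ^ (σ - 1) / τ))
    (u : ℝ → ℝ) (hu : ContinuousOn u (Icc a b))
    (hne : ∃ x ∈ Icc a b, u x ≠ 0)
    (heq : ∀ x ∈ Icc a b, u x = lam * ∫ τ in a..b, G x τ * u τ) :
    |lam| ≥ σ ^ (σ + 1) * Real.Gamma σ / ((σ - 1) ^ (σ - 1) * (Real.log (b / a)) ^ σ) := by
  have hb : (0:ℝ) < b := ha.trans hab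
  have hΓ : 0 < Real.Gamma σ := Real.Gamma_pos_of_pos (by linarith)
  have hσ1' : (0:ℝ) < σ - 1 := by linarith
  have hσ0 : (0:ℝ) < σ := by linarith
  have hL0 : 0 < Real.log b - Real.log a := sub_pos.2 (Real.log_lt_log ha hab)
  set L := Real.log b - Real.log a with hLdef
  obtain ⟨x₀, hx₀, hmax⟩ := isCompact_Icc.exists_isMaxOn (nonempty_Icc.2 hab.le) hu.abs
  set M := |u x₀| with hMdef
  have hM : 0 < M := by
    obtain ⟨z, hz, hz0⟩ := hne
    exact lt_of_lt_of_le (abs_pos.2 hz0) (hmax hz)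
  have hax : a ≤ x₀ := hx₀.1
  have hxb : x₀ ≤ b := hx₀.2
  have hx0pos : 0 < x₀ := lt_of_lt_of_le ha hax
  set s := (Real.log x₀ - Real.log a) / L with hsdef
  have hs0 : 0 ≤ s :=
    div_nonneg (sub_nonneg.2 (Real.log_le_log ha hax)) hL0.le
  have hs1 : s ≤ 1 := by
    rw [hsdef, div_le_one hL0, hLdef]
    have := Real.log_le_log hx0pos hxb
    linarith
  -- pointwise formulas for G x₀
  have hEq1 : EqOn (G x₀)
      (fun τ => (1 / Real.Gamma σ) * s ^ (σ - 1) * ((Real.log b - Real.log τ) ^ (σ - 1) / τ)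
        - (1 / Real.Gamma σ) * ((Real.log x₀ - Real.log τ) ^ (σ - 1) / τ)) (Icc a x₀) := by
    intro τ hτ
    have hτ0 : 0 < τ := lt_of_lt_of_le ha hτ.1
    rw [hG, if_pos hτ.2, Real.log_div hx0pos.ne' ha.ne', Real.log_div hb.ne' ha.ne',
      Real.log_div hb.ne' hτ0.ne', Real.log_div hx0pos.ne' hτ0.ne', ← hLdef, ← hsdef]
    ring
  have hEq2 : EqOn (G x₀)
      (fun τ => (1 / Real.Gamma σ) * s ^ (σ - 1) * ((Real.log b - Real.log τ) ^ (σ - 1) / τ))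
      (Icc x₀ b) := by
    intro τ hτ
    have hτ0 : 0 < τ := lt_of_lt_of_le hx0pos hτ.1
    rw [hG]
    by_cases h : τ ≤ x₀
    · have hτx : τ = x₀ := le_antisymm h hτ.1
      subst hτx
      rw [if_pos le_rfl, Real.log_div hx0pos.ne' ha.ne', Real.log_div hb.ne' ha.ne',
        Real.log_div hb.ne' hτ0.ne', div_self hτ0.ne', Real.log_one,
        Real.zero_rpow (by linarith : σ - 1 ≠ 0), ← hLdef, ← hsdef]
      ring
    · rw [if_neg h, Real.log_div hx0pos.ne' ha.ne', Real.log_div hb.ne' ha.ne',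
        Real.log_div hb.ne' hτ0.ne', ← hLdef, ← hsdef]
      ring
  -- continuity of G x₀ on the two pieces
  have hc2 : ContinuousOn
      (fun τ => (1 / Real.Gamma σ) * s ^ (σ - 1) * ((Real.log b - Real.log τ) ^ (σ - 1) / τ))
      (Icc a b) := continuousOn_const.mul (aux_cont σ b a b hσ1.le ha)
  have hc1 : ContinuousOn
      (fun τ => (1 / Real.Gamma σ) * s ^ (σ - 1) * ((Real.log b - Real.log τ) ^ (σ - 1) / τ)
        - (1 / Real.Gamma σ) * ((Real.log x₀ - Real.log τ) ^ (σ - 1) / τ)) (Icc a b) :=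
    hc2.sub (continuousOn_const.mul (aux_cont σ x₀ a b hσ1.le ha))
  have hGc1 : ContinuousOn (G x₀) (Icc a x₀) :=
    (hc1.mono (Icc_subset_Icc le_rfl hxb)).congr hEq1
  have hGc2 : ContinuousOn (G x₀) (Icc x₀ b) :=
    (hc2.mono (Icc_subset_Icc hax le_rfl)).congr hEq2
  -- integrability
  have hiG1 : IntervalIntegrable (G x₀) volume a x₀ := hGc1.intervalIntegrable_of_Icc hax
  have hiG2 : IntervalIntegrable (G x₀) volume x₀ b := hGc2.intervalIntegrable_of_Icc hxb
  have hiG : IntervalIntegrable (G x₀) volume a b := hiG1.trans hiG2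
  have hiGu1 : IntervalIntegrable (fun τ => G x₀ τ * u τ) volume a x₀ :=
    (hGc1.mul (hu.mono (Icc_subset_Icc le_rfl hxb))).intervalIntegrable_of_Icc hax
  have hiGu2 : IntervalIntegrable (fun τ => G x₀ τ * u τ) volume x₀ b :=
    (hGc2.mul (hu.mono (Icc_subset_Icc hax le_rfl))).intervalIntegrable_of_Icc hxb
  have hiGu : IntervalIntegrable (fun τ => G x₀ τ * u τ) volume a b := hiGu1.trans hiGu2
  -- nonnegativity of G x₀
  have hGpos : ∀ τ ∈ Icc a b, 0 ≤ G x₀ τ := by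
    intro τ hτ
    have hτ0 : 0 < τ := lt_of_lt_of_le ha hτ.1
    have hBτ : 0 ≤ Real.log b - Real.log τ := sub_nonneg.2 (Real.log_le_log hτ0 hτ.2)
    by_cases h : τ ≤ x₀
    · rw [hEq1 ⟨hτ.1, h⟩]
      have hC : 0 ≤ Real.log x₀ - Real.log τ := sub_nonneg.2 (Real.log_le_log hτ0 h)
      have hkey : Real.log x₀ - Real.log τ ≤ s * (Real.log b - Real.log τ) := by
        rw [hsdef, div_mul_eq_mul_div, le_div_iff₀ hL0, hLdef]
        have h1 : Real.log a ≤ Real.log τ := Real.log_le_log ha hτ.1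
        have h2 : Real.log x₀ ≤ Real.log b := Real.log_le_log hx0pos hxb
        nlinarith
      have hrp : (Real.log x₀ - Real.log τ) ^ (σ - 1)
          ≤ s ^ (σ - 1) * (Real.log b - Real.log τ) ^ (σ - 1) := by
        rw [← Real.mul_rpow hs0 hBτ]
        exact Real.rpow_le_rpow hC hkey (by linarith)
      have h3 : (Real.log x₀ - Real.log τ) ^ (σ - 1) / τ
          ≤ s ^ (σ - 1) * (Real.log b - Real.log τ) ^ (σ - 1) / τ := by gcongr
      have h4 := mul_le_mul_of_nonneg_left h3
        (le_of_lt (by positivity : (0:ℝ) < 1 / Real.Gamma σ))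
      simp only
      rw [sub_nonneg]
      exact h4.trans_eq (by ring)
    · rw [hEq2 ⟨le_of_not_ge h, hτ.2⟩]
      exact mul_nonneg (mul_nonneg (by positivity) (Real.rpow_nonneg hs0 _))
        (div_nonneg (Real.rpow_nonneg hBτ _) hτ0.le)
  -- value of the integral of G x₀
  have hi_b : IntervalIntegrable (fun τ : ℝ => (Real.log b - Real.log τ) ^ (σ - 1) / τ)
      volume a x₀ :=
    ((aux_cont σ b a b hσ1.le ha).mono (Icc_subset_Icc le_rfl hxb)).intervalIntegrable_of_Icc hax
  have hi_x : IntervalIntegrable (fun τ : ℝ => (Real.log x₀ - Real.log τ) ^ (σ - 1) / τ)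
      volume a x₀ :=
    ((aux_cont σ x₀ a b hσ1.le ha).mono (Icc_subset_Icc le_rfl hxb)).intervalIntegrable_of_Icc hax
  have hIa : ∫ τ in a..x₀, G x₀ τ
      = (1 / Real.Gamma σ) * s ^ (σ - 1)
          * ((L ^ σ - (Real.log b - Real.log x₀) ^ σ) / σ)
        - (1 / Real.Gamma σ) * ((Real.log x₀ - Real.log a) ^ σ / σ) := by
    rw [intervalIntegral.integral_congr (g :=
      fun τ => (1 / Real.Gamma σ) * s ^ (σ - 1) * ((Real.log b - Real.log τ) ^ (σ - 1) / τ)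
        - (1 / Real.Gamma σ) * ((Real.log x₀ - Real.log τ) ^ (σ - 1) / τ))
      (by rw [uIcc_of_le hax]; exact hEq1)]
    rw [intervalIntegral.integral_sub ((hi_b.const_mul _)) ((hi_x.const_mul _)),
      intervalIntegral.integral_const_mul, intervalIntegral.integral_const_mul,
      aux_integral σ a x₀ b hσ1 ha hax hxb, aux_integral σ a x₀ x₀ hσ1 ha hax le_rfl,
      ← hLdef, sub_self, Real.zero_rpow hσ0.ne']
    ring
  have hi_b2 : IntervalIntegrable (fun τ : ℝ => (Real.log b - Real.log τ) ^ (σ - 1) / τ)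
      volume x₀ b :=
    ((aux_cont σ b a b hσ1.le ha).mono (Icc_subset_Icc hax le_rfl)).intervalIntegrable_of_Icc hxb
  have hIb : ∫ τ in x₀..b, G x₀ τ
      = (1 / Real.Gamma σ) * s ^ (σ - 1) * ((Real.log b - Real.log x₀) ^ σ / σ) := by
    rw [intervalIntegral.integral_congr (g :=
      fun τ => (1 / Real.Gamma σ) * s ^ (σ - 1) * ((Real.log b - Real.log τ) ^ (σ - 1) / τ))
      (by rw [uIcc_of_le hxb]; exact hEq2)]
    rw [intervalIntegral.integral_const_mul,
      aux_integral σ x₀ b b hσ1 hx0pos hxb le_rfl, sub_self, Real.zero_rpow hσ0.ne']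
    ring
  have hIval : ∫ τ in a..b, G x₀ τ
      = L ^ σ / (σ * Real.Gamma σ) * (s ^ (σ - 1) * (1 - s)) := by
    rw [← intervalIntegral.integral_add_adjacent_intervals hiG1 hiG2, hIa, hIb]
    have hxa : Real.log x₀ - Real.log a = s * L := by
      rw [hsdef]; field_simp
    have hsσ : s ^ σ = s ^ (σ - 1) * s := by
      rcases eq_or_lt_of_le hs0 with h | h
      · simp [← h, Real.zero_rpow hσ0.ne']
      · have h1 := Real.rpow_add h (σ - 1) 1
        rw [Real.rpow_one] at h1
        rw [← h1]
        congr 1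
        ring
    rw [hxa, Real.mul_rpow hs0 hL0.le, hsσ]
    field_simp
    ring
  -- upper bound on the integral
  have hIle : ∫ τ in a..b, G x₀ τ
      ≤ L ^ σ / (σ * Real.Gamma σ) * ((σ - 1) ^ (σ - 1) / σ ^ σ) := by
    rw [hIval]
    exact mul_le_mul_of_nonneg_left (key_bound σ s hσ1 hs0 hs1)
      (by positivity)
  -- the main estimate
  have habs : M ≤ |lam| * ((∫ τ in a..b, G x₀ τ) * M) := by
    have h1 : M = |lam| * |∫ τ in a..b, G x₀ τ * u τ| := by
      rw [hMdef, heq x₀ hx₀, abs_mul]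
    have h2 : |∫ τ in a..b, G x₀ τ * u τ| ≤ ∫ τ in a..b, |G x₀ τ * u τ| :=
      intervalIntegral.abs_integral_le_integral_abs hab.le
    have h3 : ∫ τ in a..b, |G x₀ τ * u τ| ≤ ∫ τ in a..b, G x₀ τ * M :=
      intervalIntegral.integral_mono_on hab.le hiGu.abs (hiG.mul_const M) (fun τ hτ => by
        rw [abs_mul, abs_of_nonneg (hGpos τ hτ)]
        exact mul_le_mul_of_nonneg_left (hmax hτ) (hGpos τ hτ))
    have h4 : ∫ τ in a..b, G x₀ τ * M = (∫ τ in a..b, G x₀ τ) * M :=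
      intervalIntegral.integral_mul_const M _
    calc M = |lam| * |∫ τ in a..b, G x₀ τ * u τ| := h1
      _ ≤ |lam| * ((∫ τ in a..b, G x₀ τ) * M) :=
        mul_le_mul_of_nonneg_left (h2.trans (h3.trans h4.le)) (abs_nonneg lam)
  have h5 : 1 ≤ |lam| * ∫ τ in a..b, G x₀ τ := by nlinarith [habs, hM]
  have h6 : 1 ≤ |lam| * (L ^ σ / (σ * Real.Gamma σ) * ((σ - 1) ^ (σ - 1) / σ ^ σ)) :=
    h5.trans (mul_le_mul_of_nonneg_left hIle (abs_nonneg lam))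
  rw [ge_iff_le, Real.log_div hb.ne' ha.ne', ← hLdef]
  have hpσσ : (0:ℝ) < σ ^ σ := Real.rpow_pos_of_pos hσ0 _
  have hpσ1 : (0:ℝ) < (σ - 1) ^ (σ - 1) := Real.rpow_pos_of_pos hσ1' _
  have hpL : (0:ℝ) < L ^ σ := Real.rpow_pos_of_pos hL0 _
  rw [div_le_iff₀ (by positivity)]
  have hCC : L ^ σ / (σ * Real.Gamma σ) * ((σ - 1) ^ (σ - 1) / σ ^ σ)
      * (σ ^ σ * σ * Real.Gamma σ) = (σ - 1) ^ (σ - 1) * L ^ σ := by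
    field_simp
  calc σ ^ (σ + 1) * Real.Gamma σ = σ ^ σ * σ * Real.Gamma σ := by
        rw [Real.rpow_add_one hσ0.ne' σ]
    _ ≤ |lam| * (L ^ σ / (σ * Real.Gamma σ) * ((σ - 1) ^ (σ - 1) / σ ^ σ))
          * (σ ^ σ * σ * Real.Gamma σ) :=
        le_mul_of_one_le_left (by positivity) h6
    _ = |lam| * ((σ - 1) ^ (σ - 1) * L ^ σ) := by
        rw [mul_assoc, hCC]
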